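/- Let I be a compact interval of ℝ and let f : I → ℝ be a C² function that is not constant. If for every x ∈ I the implication holds that f'(x) = 0 implies f''(x) > 0, then f satisfies the PL condition: there exists C < ∞ such that f(x) − inf f ≤ C|f'(x)|² for every x ∈ I. -/

import Mathlib

open Set

set_option maxHeartbeats 1000000

lemma lemQ (l u : ℝ) (hlu : l < u) (f : ℝ → ℝ)
    (hf : ContDiffOn ℝ 2 f (Icc l u))
    (x₀ : ℝ) (hx₀ : x₀ ∈ Icc l u)
    (hcrit : derivWithin f (Icc l u) x₀ = 0)
    (hpos : 0 < derivWithin (derivWithin f (Icc l u)) (Icc l u) x₀) :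
    ∃ δ > 0, ∀ x ∈ Icc l u, |x - x₀| ≤ δ → x ≠ x₀ →
      f x₀ < f x ∧ f x - f x₀ ≤
        (6 / derivWithin (derivWithin f (Icc l u)) (Icc l u) x₀) *
          (derivWithin f (Icc l u) x) ^ 2 := by
  set s := Icc l u with hs
  set g := derivWithin f s with hg
  set c := derivWithin g s x₀ with hcdef
  have hu : UniqueDiffOn ℝ s := uniqueDiffOn_Icc hlu
  have h1 : ContDiffOn ℝ 1 g s := hf.derivWithin hu (by norm_num)
  have hD : HasDerivWithinAt g c s x₀ :=
    ((h1.differentiableOn one_ne_zero) x₀ hx₀).hasDerivWithinAt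
  have hslope : Filter.Tendsto (slope g x₀) (nhdsWithin x₀ (s \ {x₀})) (nhds c) :=
    hasDerivWithinAt_iff_tendsto_slope.1 hD
  have hio : Ioo (c/2) (3*c/2) ∈ nhds c := Ioo_mem_nhds (by linarith) (by linarith)
  have hev : ∀ᶠ x in nhdsWithin x₀ (s \ {x₀}), slope g x₀ x ∈ Ioo (c/2) (3*c/2) :=
    hslope.eventually_mem hio
  rw [Filter.eventually_iff, Metric.mem_nhdsWithin_iff] at hev
  obtain ⟨ε, hε, hball⟩ := hev
  refine ⟨ε/2, by linarith, ?_⟩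
  intro x hx hxd hxne
  -- slope bound at any point z in s, z ≠ x₀, |z - x₀| < ε
  have key : ∀ z ∈ s, z ≠ x₀ → |z - x₀| < ε →
      c/2 * (z - x₀) < g z ∧ g z < 3*c/2 * (z - x₀) ∨
      3*c/2 * (z - x₀) < g z ∧ g z < c/2 * (z - x₀) := by
    intro z hz hzne hzd
    have hzb : z ∈ Metric.ball x₀ ε ∩ (s \ {x₀}) := by
      refine ⟨?_, hz, hzne⟩
      simpa [Real.dist_eq] using hzd
    have := hball hzb
    simp only [mem_setOf_eq, slope_def_field, hcrit, mem_Ioo] at this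
    have hsl1 : c/2 < (g z - 0) / (z - x₀) := by
      simpa [div_sub_div_same, hcrit] using this.1
    have hsl2 : (g z - 0) / (z - x₀) < 3*c/2 := by
      simpa [div_sub_div_same, hcrit] using this.2
    rcases lt_or_gt_of_ne (sub_ne_zero.2 hzne) with hneg | hposz
    · right
      constructor
      · have := (div_lt_iff_of_neg hneg).1 hsl2
        linarith
      · have := (lt_div_iff_of_neg hneg).1 hsl1
        linarith
    · left
      constructor
      · have := (lt_div_iff₀ hposz).1 hsl1
        linarith
      · have := (div_lt_iff₀ hposz).1 hsl2
        linarith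
  have hxd' : |x - x₀| < ε := lt_of_le_of_lt hxd (by linarith)
  have hgx := key x hx hxne hxd'
  have hdiffAt : ∀ y ∈ Ioo l u, HasDerivAt f (g y) y := by
    intro y hy
    have hmem : s ∈ nhds y := Icc_mem_nhds hy.1 hy.2
    have hd : DifferentiableWithinAt ℝ f s y :=
      hf.differentiableOn (by norm_num) y ⟨hy.1.le, hy.2.le⟩
    have := (hd.differentiableAt hmem).hasDerivAt
    rwa [hg, derivWithin_of_mem_nhds hmem]
  rcases lt_or_gt_of_ne hxne with hlt | hlt
  · -- x < x₀ : MVT on [x, x₀]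
    have hcont : ContinuousOn f (Icc x x₀) := hf.continuousOn.mono (Icc_subset_Icc hx.1 hx₀.2)
    obtain ⟨ξ, hξ, hξsl⟩ := exists_hasDerivAt_eq_slope f g hlt hcont
      (fun y hy => hdiffAt y ⟨lt_of_le_of_lt hx.1 hy.1, lt_of_lt_of_le hy.2 hx₀.2⟩)
    obtain ⟨hξ1, hξ2⟩ := hξ
    have hξmem : ξ ∈ s := ⟨hx.1.trans hξ1.le, hξ2.le.trans hx₀.2⟩
    have hξne : ξ ≠ x₀ := ne_of_lt hξ2
    have habs : x₀ - x < ε := by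
      have := abs_of_nonpos (by linarith : x - x₀ ≤ 0)
      linarith [hxd']
    have hξd : |ξ - x₀| < ε := by
      rw [abs_of_nonpos (by linarith : ξ - x₀ ≤ 0)]
      linarith
    have hgξ := key ξ hξmem hξne hξd
    have hgξ' : 3*c/2 * (ξ - x₀) < g ξ ∧ g ξ < c/2 * (ξ - x₀) := by
      rcases hgξ with h' | h'
      · exfalso; nlinarith [h'.1, h'.2, mul_pos hpos (by linarith : (0:ℝ) < x₀ - ξ)]
      · exact h'
    have hfx : f x₀ - f x = g ξ * (x₀ - x) := by
      rw [eq_div_iff (by intro hh; apply absurd (sub_eq_zero.1 hh); intro h2; linarith [h2] : x₀ - x ≠ 0)] at hξsl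
      linarith [hξsl]
    have hgx' : 3*c/2 * (x - x₀) < g x ∧ g x < c/2 * (x - x₀) := by
      rcases hgx with h' | h'
      · exfalso; nlinarith [h'.1, h'.2, mul_pos hpos (by linarith : (0:ℝ) < x₀ - x)]
      · exact h'
    have hgξneg : g ξ < 0 := by nlinarith [hgξ'.2, mul_pos hpos (by linarith : (0:ℝ) < x₀ - ξ)]
    have hmin : f x₀ < f x := by nlinarith [hfx, hgξneg]
    refine ⟨hmin, ?_⟩
    have hA : f x - f x₀ ≤ 3*c/2 * (x - x₀)^2 := by
      nlinarith [hfx, hgξ'.1, mul_le_mul_of_nonneg_right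
        (by linarith [hgξ'.1] : -(g ξ) ≤ 3*c/2 * (x₀ - ξ)) (by linarith : (0:ℝ) ≤ x₀ - x),
        mul_nonneg (mul_nonneg (by linarith : (0:ℝ) ≤ 3*c/2) (by linarith : (0:ℝ) ≤ ξ - x))
          (by linarith : (0:ℝ) ≤ x₀ - x)]
    have h2gx : 2 * g x < c * (x - x₀) := by linarith [hgx'.2]
    have hsumneg : 2 * g x + c * (x - x₀) < 0 := by
      nlinarith [h2gx, mul_pos hpos (by linarith : (0:ℝ) < x₀ - x)]
    have hB : c^2 * (x - x₀)^2 ≤ 4 * (g x)^2 := by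
      nlinarith [mul_pos_of_neg_of_neg (by linarith [h2gx] : 2 * g x - c * (x - x₀) < 0) hsumneg]
    rw [div_mul_eq_mul_div, le_div_iff₀ hpos]
    nlinarith [hA, hB, mul_le_mul_of_nonneg_right hA hpos.le]
  · -- x₀ < x : MVT on [x₀, x]
    have hcont : ContinuousOn f (Icc x₀ x) := hf.continuousOn.mono (Icc_subset_Icc hx₀.1 hx.2)
    obtain ⟨ξ, hξ, hξsl⟩ := exists_hasDerivAt_eq_slope f g hlt hcont
      (fun y hy => hdiffAt y ⟨lt_of_le_of_lt hx₀.1 hy.1, lt_of_lt_of_le hy.2 hx.2⟩)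
    obtain ⟨hξ1, hξ2⟩ := hξ
    have hξmem : ξ ∈ s := ⟨hx₀.1.trans hξ1.le, hξ2.le.trans hx.2⟩
    have hξne : ξ ≠ x₀ := ne_of_gt hξ1
    have habs : x - x₀ < ε := by
      have := abs_of_nonneg (by linarith : (0:ℝ) ≤ x - x₀)
      linarith [hxd']
    have hξd : |ξ - x₀| < ε := by
      rw [abs_of_nonneg (by linarith : (0:ℝ) ≤ ξ - x₀)]
      linarith
    have hgξ := key ξ hξmem hξne hξd
    have hgξ' : c/2 * (ξ - x₀) < g ξ ∧ g ξ < 3*c/2 * (ξ - x₀) := by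
      rcases hgξ with h' | h'
      · exact h'
      · exfalso; nlinarith [h'.1, h'.2, mul_pos hpos (by linarith : (0:ℝ) < ξ - x₀)]
    have hfx : f x - f x₀ = g ξ * (x - x₀) := by
      rw [eq_div_iff (by intro hh; apply absurd (sub_eq_zero.1 hh); intro h2; linarith [h2] : x - x₀ ≠ 0)] at hξsl
      linarith [hξsl]
    have hgx' : c/2 * (x - x₀) < g x ∧ g x < 3*c/2 * (x - x₀) := by
      rcases hgx with h' | h'
      · exact h'
      · exfalso; nlinarith [h'.1, h'.2, mul_pos hpos (by linarith : (0:ℝ) < x - x₀)]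
    have hgξpos : 0 < g ξ := by nlinarith [hgξ'.1, mul_pos hpos (by linarith : (0:ℝ) < ξ - x₀)]
    have hmin : f x₀ < f x := by nlinarith [hfx, hgξpos]
    refine ⟨hmin, ?_⟩
    have hA : f x - f x₀ ≤ 3*c/2 * (x - x₀)^2 := by
      nlinarith [hfx, mul_le_mul_of_nonneg_right
        (by linarith [hgξ'.2] : g ξ ≤ 3*c/2 * (ξ - x₀)) (by linarith : (0:ℝ) ≤ x - x₀),
        mul_nonneg (mul_nonneg (by linarith : (0:ℝ) ≤ 3*c/2) (by linarith : (0:ℝ) ≤ x - ξ))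
          (by linarith : (0:ℝ) ≤ x - x₀)]
    have h2gx : c * (x - x₀) < 2 * g x := by linarith [hgx'.1]
    have hsumpos : 0 < 2 * g x + c * (x - x₀) := by
      nlinarith [h2gx, mul_pos hpos (by linarith : (0:ℝ) < x - x₀)]
    have hB : c^2 * (x - x₀)^2 ≤ 4 * (g x)^2 := by
      nlinarith [mul_pos (by linarith [h2gx] : 0 < 2 * g x - c * (x - x₀)) hsumpos]
    rw [div_mul_eq_mul_div, le_div_iff₀ hpos]
    nlinarith [hA, hB, mul_le_mul_of_nonneg_right hA hpos.le]

lemma lemL (l u : ℝ) (hlu : l < u) (f : ℝ → ℝ)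
    (hf : ContDiffOn ℝ 2 f (Icc l u))
    (h : ∀ x ∈ Icc l u, derivWithin f (Icc l u) x = 0 →
      0 < derivWithin (derivWithin f (Icc l u)) (Icc l u) x)
    (x₀ : ℝ) (hx₀ : x₀ ∈ Icc l u)
    (hcrit : derivWithin f (Icc l u) x₀ = 0)
    (y : ℝ) (hy : y ∈ Icc l u) (hne : y ≠ x₀) (hle : f y ≤ f x₀) : False := by
  obtain ⟨δ₀, hδ₀, hQ₀⟩ := lemQ l u hlu f hf x₀ hx₀ hcrit (h x₀ hx₀ hcrit)
  set a := min x₀ y with ha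
  set b := max x₀ y with hb
  have hab : a < b := by
    rcases lt_or_gt_of_ne hne with h' | h'
    · rw [ha, hb, min_eq_right h'.le, max_eq_left h'.le]; exact h'
    · rw [ha, hb, min_eq_left h'.le, max_eq_right h'.le]; exact h'
  have hal : l ≤ a := le_min hx₀.1 hy.1
  have hbu : b ≤ u := max_le hx₀.2 hy.2
  have hsub : Icc a b ⊆ Icc l u := Icc_subset_Icc hal hbu
  obtain ⟨q, hq, hqmax⟩ := isCompact_Icc.exists_isMaxOn (Set.nonempty_Icc.2 hab.le)
    (hf.continuousOn.mono hsub)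
  -- find x₁ ∈ Icc a b with f x₀ < f x₁
  have hx₁ : ∃ x₁ ∈ Icc a b, f x₀ < f x₁ := by
    rcases lt_or_gt_of_ne hne with h' | h'
    · set x₁ := max (x₀ - δ₀) y with hx1
      have hm1 : x₀ - δ₀ ≤ x₁ := le_max_left _ _
      have hm2 : y ≤ x₁ := le_max_right _ _
      have hm3 : x₁ < x₀ := max_lt (by linarith) h'
      have hmem : x₁ ∈ Icc a b := ⟨(min_le_right x₀ y).trans hm2, le_trans hm3.le (le_max_left _ _)⟩
      refine ⟨x₁, hmem, (hQ₀ x₁ (hsub hmem) ?_ (ne_of_lt hm3)).1⟩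
      rw [abs_of_nonpos (by linarith)]; linarith
    · set x₁ := min (x₀ + δ₀) y with hx1
      have hm1 : x₁ ≤ x₀ + δ₀ := min_le_left _ _
      have hm2 : x₁ ≤ y := min_le_right _ _
      have hm3 : x₀ < x₁ := lt_min (by linarith) h'
      have hmem : x₁ ∈ Icc a b := ⟨(min_le_left x₀ y).trans hm3.le, hm2.trans (le_max_right _ _)⟩
      refine ⟨x₁, hmem, (hQ₀ x₁ (hsub hmem) ?_ (ne_of_gt hm3)).1⟩
      rw [abs_of_nonneg (by linarith)]; linarith
  obtain ⟨x₁, hx₁m, hx₁v⟩ := hx₁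
  have hfq : f x₀ < f q := lt_of_lt_of_le hx₁v (hqmax hx₁m)
  have hfa : f a ≤ f x₀ := by
    rw [ha]
    rcases min_cases x₀ y with ⟨h1, _⟩ | ⟨h1, _⟩
    · rw [h1]
    · rw [h1]; exact hle
  have hfb : f b ≤ f x₀ := by
    rw [hb]
    rcases max_cases x₀ y with ⟨h1, _⟩ | ⟨h1, _⟩
    · rw [h1]
    · rw [h1]; exact hle
  have hqa : a < q :=
    lt_of_le_of_ne hq.1 (fun h'' => absurd hfq (not_lt.2 (h'' ▸ hfa)))
  have hqb : q < b :=
    lt_of_le_of_ne hq.2 (fun h'' => absurd hfq (not_lt.2 (h''.symm ▸ hfb)))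
  have hqmem : q ∈ Icc l u := hsub hq
  have hqnhds : Icc l u ∈ nhds q := Icc_mem_nhds (lt_of_le_of_lt hal hqa) (lt_of_lt_of_le hqb hbu)
  have hlocmax : IsLocalMax f q := hqmax.isLocalMax (Icc_mem_nhds hqa hqb)
  have hderivq : derivWithin f (Icc l u) q = 0 := by
    rw [derivWithin_of_mem_nhds hqnhds]
    exact hlocmax.deriv_eq_zero
  obtain ⟨δq, hδq, hQq⟩ := lemQ l u hlu f hf q hqmem hderivq (h q hqmem hderivq)
  set y₂ := min (q + δq) b with hy₂
  have hy₂gt : q < y₂ := lt_min (by linarith) hqb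
  have hy₂m : y₂ ∈ Icc a b := ⟨hqa.le.trans hy₂gt.le, min_le_right _ _⟩
  have := (hQq y₂ (hsub hy₂m) (by
    rw [abs_of_nonneg (by linarith)]
    have := min_le_left (q + δq) b
    linarith) (ne_of_gt hy₂gt)).1
  exact absurd (hqmax hy₂m) (not_le.2 this)

/-- If `f` is a non-constant `C²` function on a compact interval `[l,u]` such that
`f'(x) = 0` implies `f''(x) > 0` for every `x ∈ [l,u]`, then `f` satisfies the PL
condition: there is a constant `C` such that `f(x) - inf f ≤ C |f'(x)|²` on `[l,u]`. -/
theorem statement_4 (l u : ℝ) (f : ℝ → ℝ)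
    (hf : ContDiffOn ℝ 2 f (Icc l u))
    (hnc : ∃ x ∈ Icc l u, ∃ y ∈ Icc l u, f x ≠ f y)
    (h : ∀ x ∈ Icc l u, derivWithin f (Icc l u) x = 0 →
      0 < derivWithin (derivWithin f (Icc l u)) (Icc l u) x) :
    ∃ C : ℝ, ∀ x ∈ Icc l u,
      f x - sInf (f '' Icc l u) ≤ C * (derivWithin f (Icc l u) x) ^ 2 := by
  obtain ⟨p, hp, q, hq, hpq⟩ := hnc
  have hlu : l < u := by
    rcases lt_or_ge l u with h' | h'
    · exact h'
    · exfalso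
      have h1 : p = l := le_antisymm (hp.2.trans h') hp.1
      have h2 : q = l := le_antisymm (hq.2.trans h') hq.1
      exact hpq (by rw [h1, h2])
  have hne : (Icc l u).Nonempty := ⟨l, le_refl l, hlu.le⟩
  have hbdd : BddBelow (f '' Icc l u) :=
    (isCompact_Icc.image_of_continuousOn hf.continuousOn).bddBelow
  have hm_le : ∀ z ∈ Icc l u, sInf (f '' Icc l u) ≤ f z :=
    fun z hz => csInf_le hbdd ⟨z, hz, rfl⟩
  have hcont' : ContinuousOn (derivWithin f (Icc l u)) (Icc l u) :=
    hf.continuousOn_derivWithin (uniqueDiffOn_Icc hlu) (by norm_num)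
  obtain ⟨w, hw, hwmax⟩ := isCompact_Icc.exists_isMaxOn hne hf.continuousOn
  by_cases hex : ∃ x₀ ∈ Icc l u, derivWithin f (Icc l u) x₀ = 0
  · obtain ⟨x₀, hx₀, hcrit⟩ := hex
    -- x₀ is the unique global minimizer
    have hmin : ∀ z ∈ Icc l u, f x₀ ≤ f z := by
      intro z hz
      by_contra hlt
      exact lemL l u hlu f hf h x₀ hx₀ hcrit z hz
        (fun h'' => hlt (h'' ▸ le_rfl)) (le_of_not_ge hlt)
    have hmeq : sInf (f '' Icc l u) = f x₀ :=
      le_antisymm (hm_le x₀ hx₀)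
        (le_csInf (hne.image f) (by rintro b ⟨z, hz, rfl⟩; exact hmin z hz))
    obtain ⟨δ, hδ, hQ⟩ := lemQ l u hlu f hf x₀ hx₀ hcrit (h x₀ hx₀ hcrit)
    set c := derivWithin (derivWithin f (Icc l u)) (Icc l u) x₀ with hc
    have hcpos : 0 < c := h x₀ hx₀ hcrit
    set K := Icc l u \ Metric.ball x₀ δ with hK
    by_cases hKne : K.Nonempty
    · have hKcompact : IsCompact K := isCompact_Icc.diff Metric.isOpen_ball
      obtain ⟨z, hz, hzmin⟩ := hKcompact.exists_isMinOn hKne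
        ((hcont'.mono (diff_subset)).pow 2)
      have hzne : derivWithin f (Icc l u) z ≠ 0 := by
        intro h0
        have hzx₀ : z ≠ x₀ := by
          intro hh
          have := hz.2
          rw [hh] at this
          exact this (Metric.mem_ball_self hδ)
        exact lemL l u hlu f hf h z hz.1 h0 x₀ hx₀ (Ne.symm hzx₀) (hmin z hz.1)
      set ε := (derivWithin f (Icc l u) z) ^ 2 with hε
      have hεpos : 0 < ε := by positivity
      refine ⟨max (6 / c) ((f w - f x₀) / ε), ?_⟩
      intro x hx
      rw [hmeq]
      by_cases hxball : x ∈ Metric.ball x₀ δ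
      · by_cases hxx₀ : x = x₀
        · rw [hxx₀, sub_self]
          have : (0:ℝ) ≤ max (6 / c) ((f w - f x₀) / ε) :=
            le_trans (by positivity) (le_max_left _ _)
          positivity
        · have hxd : |x - x₀| ≤ δ := by
            rw [Metric.mem_ball, Real.dist_eq] at hxball
            exact hxball.le
          have := (hQ x hx hxd hxx₀).2
          refine this.trans (mul_le_mul_of_nonneg_right (le_max_left _ _) (by positivity))
      · have hxK : x ∈ K := ⟨hx, hxball⟩
        have h0 : f x ≤ f w := hwmax hx
        have h1 : f x - f x₀ ≤ f w - f x₀ := by linarith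
        have h2 : ε ≤ (derivWithin f (Icc l u) x) ^ 2 := hzmin hxK
        have h3 : 0 ≤ f w - f x₀ := by linarith [hmin w hw]
        calc f x - f x₀ ≤ f w - f x₀ := h1
          _ = ((f w - f x₀) / ε) * ε := by field_simp
          _ ≤ ((f w - f x₀) / ε) * (derivWithin f (Icc l u) x) ^ 2 :=
              mul_le_mul_of_nonneg_left h2 (by positivity)
          _ ≤ max (6 / c) ((f w - f x₀) / ε) * (derivWithin f (Icc l u) x) ^ 2 :=
              mul_le_mul_of_nonneg_right (le_max_right _ _) (by positivity)
    · refine ⟨6 / c, ?_⟩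
      intro x hx
      rw [hmeq]
      have hxball : x ∈ Metric.ball x₀ δ := by
        by_contra hh
        exact hKne ⟨x, hx, hh⟩
      by_cases hxx₀ : x = x₀
      · rw [hxx₀, sub_self]
        positivity
      · have hxd : |x - x₀| ≤ δ := by
          rw [Metric.mem_ball, Real.dist_eq] at hxball
          exact hxball.le
        exact (hQ x hx hxd hxx₀).2
  · push_neg at hex
    obtain ⟨z, hz, hzmin⟩ := isCompact_Icc.exists_isMinOn hne (hcont'.pow 2)
    set ε := (derivWithin f (Icc l u) z) ^ 2 with hε
    have hεpos : 0 < ε := by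
      have := hex z hz
      positivity
    refine ⟨(f w - sInf (f '' Icc l u)) / ε, ?_⟩
    intro x hx
    have h0 : f x ≤ f w := hwmax hx
    have h1 : f x - sInf (f '' Icc l u) ≤ f w - sInf (f '' Icc l u) := by linarith
    have h2 : ε ≤ (derivWithin f (Icc l u) x) ^ 2 := hzmin hx
    have h3 : 0 ≤ f w - sInf (f '' Icc l u) := by linarith [hm_le w hw]
    calc f x - sInf (f '' Icc l u) ≤ f w - sInf (f '' Icc l u) := h1
      _ = ((f w - sInf (f '' Icc l u)) / ε) * ε := by field_simp
      _ ≤ ((f w - sInf (f '' Icc l u)) / ε) * (derivWithin f (Icc l u) x) ^ 2 :=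
          mul_le_mul_of_nonneg_left h2 (by positivity)
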